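/- arXiv:0911.0329 — 3 statements merged into one kernel-verified Lean document; each statement's English description precedes it below -/
import Mathlib

section
/- For every nonzero integer m, the integral over [-π,π] of e^{imθ}/(1 - e^{i sgn(m) θ}) against the measure sin²(θ/2) dθ/π equals -1/2 if m ∈ {1,-1}, and equals 0 otherwise. -/
open Real MeasureTheory Complex

lemma aux_int_exp (k : ℤ) :
    ∫ θ : ℝ in Set.Icc (-π) π, Complex.exp (Complex.I * k * θ)
      = if k = 0 then (2 * π : ℂ) else 0 := by
  rw [MeasureTheory.integral_Icc_eq_integral_Ioc,
    ← intervalIntegral.integral_of_le (by linarith [Real.pi_pos] : (-π : ℝ) ≤ π)]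
  by_cases hk : k = 0
  · subst hk
    simp [intervalIntegral.integral_const]
    ring
  · rw [if_neg hk]
    have hc : (Complex.I * k) ≠ 0 := by
      simp [Complex.I_ne_zero]
      exact_mod_cast hk
    have heq : ∀ θ : ℝ, Complex.exp (Complex.I * k * θ) = Complex.exp ((Complex.I * k) * θ) := by
      intro θ; ring_nf
    rw [intervalIntegral.integral_congr (fun θ _ => heq θ), integral_exp_mul_complex hc]
    have e1 : Complex.exp (Complex.I * k * π) = (-1 : ℂ) ^ k := by
      rw [show Complex.I * (k:ℂ) * ((π:ℝ):ℂ) = (k:ℂ) * ((π:ℝ) * Complex.I) by ring,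
        Complex.exp_int_mul, Complex.exp_pi_mul_I]
    have e2 : Complex.exp (Complex.I * k * ((-π : ℝ) : ℂ)) = ((-1 : ℂ) ^ k)⁻¹ := by
      rw [show Complex.I * (k:ℂ) * ((-π:ℝ):ℂ) = ((-k : ℤ):ℂ) * ((π:ℝ) * Complex.I) by push_cast; ring,
        Complex.exp_int_mul, Complex.exp_pi_mul_I, zpow_neg]
    have hsq : ((-1 : ℂ) ^ k) * ((-1 : ℂ) ^ k) = 1 := by
      rw [← zpow_add₀ (by norm_num : (-1:ℂ) ≠ 0), show k + k = 2 * k by ring, zpow_mul]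
      norm_num
    rw [e1, e2, inv_eq_of_mul_eq_one_right hsq]
    simp

lemma aux_sinsq (θ : ℝ) :
    ((Real.sin (θ/2))^2 : ℂ) =
      (1 - Complex.exp (Complex.I * θ)) * (1 - Complex.exp (-(Complex.I * θ))) / 4 := by
  have h1 : Complex.exp (Complex.I * θ) = Complex.exp (((θ:ℂ)/2) * Complex.I) ^ 2 := by
    rw [sq, ← Complex.exp_add]; ring_nf
  have h2 : Complex.exp (-(Complex.I * θ)) = Complex.exp ((-((θ:ℂ)/2)) * Complex.I) ^ 2 := by
    rw [sq, ← Complex.exp_add]; ring_nf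
  have h3 : Complex.exp (((θ:ℂ)/2) * Complex.I) * Complex.exp ((-((θ:ℂ)/2)) * Complex.I) = 1 := by
    rw [← Complex.exp_add]; ring_nf; exact Complex.exp_zero
  have h4 : ((Real.sin (θ/2) : ℝ) : ℂ) = Complex.sin ((θ:ℂ)/2) := by
    rw [Complex.ofReal_sin]; push_cast; ring_nf
  calc ((Real.sin (θ/2))^2 : ℂ) = Complex.sin ((θ:ℂ)/2) ^ 2 := by rw [← h4]
    _ = _ := by
        rw [Complex.sin, h1, h2]
        set a := Complex.exp (((θ:ℂ)/2) * Complex.I) with ha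
        set b := Complex.exp ((-((θ:ℂ)/2)) * Complex.I) with hb
        have hI : Complex.I ^ 2 = -1 := Complex.I_sq
        linear_combination ((b - a)^2/4) * hI + ((1 - a*b)/4) * h3

lemma aux_ne_one (s : ℤ) (hs : s = 1 ∨ s = -1) (θ : ℝ) (hθ1 : θ ∈ Set.Icc (-π) π)
    (hθ0 : θ ≠ 0) : Complex.exp (Complex.I * s * θ) ≠ 1 := by
  intro h
  rw [Complex.exp_eq_one_iff] at h
  obtain ⟨n, hn⟩ := h
  have h2 : (((s : ℝ) * θ : ℝ) : ℂ) * Complex.I = ((2 * π * n : ℝ) : ℂ) * Complex.I := by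
    push_cast at hn ⊢; linear_combination hn
  have h3 : (s : ℝ) * θ = 2 * π * n :=
    Complex.ofReal_inj.mp (mul_right_cancel₀ Complex.I_ne_zero h2)
  obtain ⟨hθl, hθr⟩ := hθ1
  have hpi := Real.pi_pos
  rcases lt_trichotomy n 0 with h4 | h4 | h4
  · have : (n : ℝ) ≤ -1 := by
      have h5 : n ≤ -1 := by omega
      exact_mod_cast h5
    rcases hs with rfl | rfl <;> push_cast at h3 <;> nlinarith
  · subst h4
    rcases hs with rfl | rfl <;> push_cast at h3 <;> simp at h3 <;> exact hθ0 h3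
  · have : (1 : ℝ) ≤ n := by exact_mod_cast h4
    rcases hs with rfl | rfl <;> push_cast at h3 <;> nlinarith


/-- `∫_{-π}^π e^{imθ}/(1 - e^{i sgn(m) θ}) sin²(θ/2) dθ/π = -1/2` if `m = ±1`, `0` otherwise. -/
theorem stmt5 (m : ℤ) (hm : m ≠ 0) :
    ∫ θ : ℝ in Set.Icc (-π) π,
      (Complex.exp (Complex.I * m * θ) / (1 - Complex.exp (Complex.I * (m.sign : ℤ) * θ)))
        * ((Real.sin (θ / 2) ^ 2 / π : ℝ) : ℂ)
    = if m = 1 ∨ m = -1 then (-1/2 : ℂ) else 0 := by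
  have hpi := Real.pi_pos
  have hπC : ((π : ℝ) : ℂ) ≠ 0 := by simpa using Real.pi_ne_zero
  have hs : m.sign = 1 ∨ m.sign = -1 := by
    rcases lt_or_gt_of_ne hm with h | h
    · right; exact Int.sign_eq_neg_one_of_neg h
    · left; exact Int.sign_eq_one_of_pos h
  have h0 : ∀ᵐ θ : ℝ, θ ≠ 0 := by
    rw [MeasureTheory.ae_iff]; simp
  have hcong :
      (∫ θ : ℝ in Set.Icc (-π) π,
        (Complex.exp (Complex.I * m * θ) / (1 - Complex.exp (Complex.I * (m.sign : ℤ) * θ)))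
          * ((Real.sin (θ / 2) ^ 2 / π : ℝ) : ℂ))
      = ∫ θ : ℝ in Set.Icc (-π) π,
          (Complex.exp (Complex.I * m * θ)
            - Complex.exp (Complex.I * ((m - m.sign : ℤ) : ℂ) * θ)) / (4 * π) := by
    refine MeasureTheory.setIntegral_congr_ae measurableSet_Icc ?_
    filter_upwards [h0] with θ hθ0 hθmem
    have hne := aux_ne_one m.sign hs θ hθmem hθ0
    have hsplit : Complex.exp (Complex.I * ((m - m.sign : ℤ) : ℂ) * θ)
        = Complex.exp (Complex.I * m * θ) * Complex.exp (-(Complex.I * ((m.sign : ℤ) : ℂ) * θ)) := by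
      rw [← Complex.exp_add]; push_cast; ring_nf
    have hcast : ((Real.sin (θ / 2) ^ 2 / π : ℝ) : ℂ)
        = ((Real.sin (θ/2))^2 : ℂ) / ((π : ℝ) : ℂ) := by push_cast; ring
    rw [hcast, aux_sinsq, hsplit]
    rcases hs with hs1 | hs1 <;> rw [hs1] at hne ⊢ <;> push_cast at hne ⊢
    · rw [show Complex.I * 1 * (θ:ℂ) = Complex.I * θ from by ring] at hne ⊢
      have hA : 1 - Complex.exp (Complex.I * θ) ≠ 0 := sub_ne_zero.mpr (fun h => hne h.symm)
      field_simp
    · rw [show Complex.I * (-1) * (θ:ℂ) = -(Complex.I * θ) from by ring] at hne ⊢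
      rw [show -(-(Complex.I * (θ:ℂ))) = Complex.I * θ from by ring]
      have hB : 1 - Complex.exp (-(Complex.I * θ)) ≠ 0 := sub_ne_zero.mpr (fun h => hne h.symm)
      field_simp
  rw [hcong]
  have hint : ∀ k : ℤ, MeasureTheory.IntegrableOn
      (fun θ : ℝ => Complex.exp (Complex.I * k * θ)) (Set.Icc (-π) π) := by
    intro k
    apply Continuous.integrableOn_Icc
    continuity
  have hsub : (∫ θ : ℝ in Set.Icc (-π) π,
      (Complex.exp (Complex.I * m * θ)
        - Complex.exp (Complex.I * ((m - m.sign : ℤ) : ℂ) * θ)) / (4 * π))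
      = ((∫ θ : ℝ in Set.Icc (-π) π, Complex.exp (Complex.I * m * θ))
        - ∫ θ : ℝ in Set.Icc (-π) π, Complex.exp (Complex.I * ((m - m.sign : ℤ) : ℂ) * θ)) / (4 * π) := by
    rw [← MeasureTheory.integral_sub (hint m) (hint (m - m.sign))]
    simp_rw [div_eq_mul_inv]
    rw [← MeasureTheory.integral_mul_const]
  rw [hsub, aux_int_exp m, aux_int_exp (m - m.sign), if_neg hm]
  have hk : (m - m.sign = 0) ↔ (m = 1 ∨ m = -1) := by
    constructor
    · intro h
      rcases hs with h1 | h1 <;> rw [h1] at h <;> omega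
    · rintro (rfl | rfl) <;> simp
  by_cases hc : m = 1 ∨ m = -1
  · rw [if_pos hc, if_pos (hk.mpr hc)]
    field_simp
    ring
  · rw [if_neg hc, if_neg (fun h => hc (hk.mp h))]
    simp
end

section
/- Let K be a totally real number field and A a quaternion algebra over K. The kernel of the natural surjection from the quotient of fractional ideals by principal ideals generated by elements of K_A = {x ∈ K : ι_ν(x) > 0 for all ν ∈ Ram_∞(A)}, onto the class group H(K), has order 2^{r_A}/[O_K^* : n_A(R^*)], where r_A = #Ram_∞(A) and n_A(R^*) = O_K^* ∩ K_A. -/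
open NumberField
open scoped nonZeroDivisors

/-- The subgroup of `Kˣ` of elements positive at every real embedding in `S`
(for `S = Ram_∞(A)` this is `K_A ∩ Kˣ`). -/
def positiveAt (K : Type*) [Field K] (S : Finset (K →+* ℝ)) : Subgroup Kˣ where
  carrier := {x | ∀ φ ∈ S, 0 < φ x}
  mul_mem' := by
    intro a b ha hb φ hφ
    rw [Units.val_mul, map_mul]
    exact mul_pos (ha φ hφ) (hb φ hφ)
  one_mem' := by intro φ _; simp
  inv_mem' := by
    intro a ha φ hφ
    rw [Units.val_inv_eq_inv_val, map_inv₀]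
    exact inv_pos.mpr (ha φ hφ)

/-- The subgroup of units of `𝓞 K` positive at every embedding in `S`
(this is `𝓞_Kˣ ∩ K_A = n_A(R^*)`). -/
def unitsPositiveAt (K : Type*) [Field K] [NumberField K] (S : Finset (K →+* ℝ)) :
    Subgroup (𝓞 K)ˣ where
  carrier := {u | ∀ φ ∈ S, 0 < φ (algebraMap (𝓞 K) K u)}
  mul_mem' := by
    intro a b ha hb φ hφ
    rw [Units.val_mul, map_mul, map_mul]
    exact mul_pos (ha φ hφ) (hb φ hφ)
  one_mem' := by intro φ _; simp
  inv_mem' := by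
    intro a ha φ hφ
    have hx := ha φ hφ
    have h1 : φ (algebraMap (𝓞 K) K ↑a) * φ (algebraMap (𝓞 K) K ↑a⁻¹) = 1 := by
      simp [← map_mul, ← Units.val_mul]
    nlinarith [hx, h1]

/-- The sign homomorphism from `ℝˣ` to `ℤˣ`. -/
noncomputable def signHomAux : ℝˣ →* ℤˣ where
  toFun u := if 0 < (u : ℝ) then 1 else -1
  map_one' := by simp
  map_mul' a b := by
    rcases (lt_or_gt_of_ne a.ne_zero) with ha | ha <;>
      rcases (lt_or_gt_of_ne b.ne_zero) with hb | hb
    · simp [Units.val_mul, mul_pos_of_neg_of_neg ha hb, ha.not_gt, hb.not_gt]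
    · simp [Units.val_mul, (mul_neg_of_neg_of_pos ha hb).not_gt, ha.not_gt, hb]
    · simp [Units.val_mul, (mul_neg_of_pos_of_neg ha hb).not_gt, ha, hb.not_gt]
    · simp [Units.val_mul, mul_pos ha hb, ha, hb]

/-- A number field has an element separating all its real embeddings. -/
lemma exists_separating (K : Type*) [Field K] [NumberField K] :
    ∃ θ : K, ∀ φ ψ : K →+* ℝ, φ θ = ψ θ → φ = ψ := by
  obtain ⟨θ, hθ⟩ := Field.exists_primitive_element ℚ K
  refine ⟨θ, fun φ ψ hval => ?_⟩
  have hadj : Algebra.adjoin ℚ {θ} = ⊤ := by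
    rw [← IntermediateField.adjoin_simple_toSubalgebra_of_isAlgebraic (IsIntegral.of_finite ℚ _).isAlgebraic, hθ]
    rfl
  have h2 : φ.toRatAlgHom = ψ.toRatAlgHom :=
    AlgHom.ext_of_adjoin_eq_top hadj (fun x hx => hx ▸ hval)
  exact RingHom.ext fun x => AlgHom.congr_fun h2 x

/-- There is a unit of `K` negative at a chosen embedding of `S` and positive at
all the others. -/
lemma exists_neg_at (K : Type*) [Field K] [NumberField K] (S : Finset (K →+* ℝ))
    {φ0 : K →+* ℝ} (hφ0 : φ0 ∈ S) :
    ∃ x : Kˣ, φ0 x < 0 ∧ ∀ ψ ∈ S, ψ ≠ φ0 → 0 < ψ x := by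
  classical
  obtain ⟨θ, hθ⟩ := exists_separating K
  set r : ℝ := φ0 θ with hr
  set E : Finset ℝ := (S.erase φ0).image (fun ψ => |ψ θ - r|) with hE
  have hposE : ∀ e ∈ E, 0 < e := by
    intro e he
    rw [hE] at he
    obtain ⟨ψ, hψ, rfl⟩ := Finset.mem_image.mp he
    have hne : ψ θ ≠ r := fun hc => (Finset.mem_erase.mp hψ).1 (hθ ψ φ0 hc)
    exact abs_pos.mpr (sub_ne_zero.mpr hne)
  set ε : ℝ := if hEne : E.Nonempty then E.min' hEne else 1 with hεdef
  have hε0 : 0 < ε := by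
    rw [hεdef]
    split_ifs with hEne
    · exact hposE _ (E.min'_mem hEne)
    · norm_num
  have hεle : ∀ ψ ∈ S, ψ ≠ φ0 → ε ≤ |ψ θ - r| := by
    intro ψ hψ hne
    have hmem : |ψ θ - r| ∈ E := by
      rw [hE]
      exact Finset.mem_image.mpr ⟨ψ, Finset.mem_erase.mpr ⟨hne, hψ⟩, rfl⟩
    rw [hεdef]
    split_ifs with hEne
    · exact E.min'_le _ hmem
    · exact absurd ⟨_, hmem⟩ hEne
  obtain ⟨a, ha1, ha2⟩ := exists_rat_btwn (show r - ε < r by linarith)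
  obtain ⟨b, hb1, hb2⟩ := exists_rat_btwn (show r < r + ε by linarith)
  have key : ∀ ψ : K →+* ℝ, ψ ((θ - (a : K)) * (θ - (b : K))) = (ψ θ - a) * (ψ θ - b) := by
    intro ψ
    rw [map_mul, map_sub, map_sub, map_ratCast, map_ratCast]
  have hφ0neg : φ0 ((θ - (a : K)) * (θ - (b : K))) < 0 := by
    rw [key]
    exact mul_neg_of_pos_of_neg (by linarith) (by linarith)
  have hxne : (θ - (a : K)) * (θ - (b : K)) ≠ 0 := by
    intro hc
    rw [hc, map_zero] at hφ0neg
    exact lt_irrefl 0 hφ0neg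
  refine ⟨Units.mk0 _ hxne, by simpa using hφ0neg, ?_⟩
  intro ψ hψ hne
  have hd := hεle ψ hψ hne
  rw [Units.val_mk0, key]
  rcases le_abs.mp hd with hcase | hcase
  · have h1 : r + ε ≤ ψ θ := by linarith
    exact mul_pos (by linarith) (by linarith)
  · have h1 : ψ θ ≤ r - ε := by linarith
    exact mul_pos_of_neg_of_neg (by linarith) (by linarith)

/-- The index of the subgroup of totally `S`-positive elements of `Kˣ` is `2 ^ #S`. -/
lemma index_positiveAt (K : Type*) [Field K] [NumberField K] (S : Finset (K →+* ℝ)) :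
    (positiveAt K S).index = 2 ^ S.card := by
  classical
  set σ : Kˣ →* (↥S → ℤˣ) :=
    Pi.monoidHom (fun φ : ↥S => signHomAux.comp (Units.map (φ.1 : K →+* ℝ).toMonoidHom)) with hσ
  have happ : ∀ (x : Kˣ) (φ : ↥S), σ x φ = if 0 < φ.1 (x : K) then 1 else -1 := by
    intro x φ
    rfl
  have hker : σ.ker = positiveAt K S := by
    ext x
    simp only [MonoidHom.mem_ker, funext_iff, Pi.one_apply]
    constructor
    · intro hx φ hφ
      have := hx ⟨φ, hφ⟩
      rw [happ] at this
      by_contra hc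
      rw [if_neg hc] at this
      exact absurd this (by decide : ¬ (-1 : ℤˣ) = 1)
    · intro hx φ
      rw [happ, if_pos (hx φ.1 φ.2)]
  have hsurj : Function.Surjective σ := by
    intro ε
    choose g hg1 hg2 using fun φ : ↥S => exists_neg_at K S φ.2
    set N : Finset ↥S := Finset.univ.filter (fun φ : ↥S => ε φ = -1) with hN
    refine ⟨∏ φ ∈ N, g φ, ?_⟩
    have hval : ∀ χ : K →+* ℝ, χ ((∏ φ ∈ N, g φ : Kˣ) : K) = ∏ φ ∈ N, χ (g φ) := by
      intro χ
      rw [show ((∏ φ ∈ N, g φ : Kˣ) : K) = ∏ φ ∈ N, ((g φ : Kˣ) : K) from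
        map_prod (Units.coeHom K) g N, map_prod]
    funext ψ
    rw [happ, hval]
    rcases Int.units_eq_one_or (ε ψ) with hε | hε
    · have hψN : ψ ∉ N := by
        rw [hN, Finset.mem_filter]
        rintro ⟨-, hc⟩
        rw [hε] at hc
        exact absurd hc (by decide)
      have hpos : (0:ℝ) < ∏ φ ∈ N, ψ.1 (g φ) := by
        apply Finset.prod_pos
        intro φ hφ
        refine hg2 φ ψ.1 ψ.2 (fun hc => hψN ?_)
        rw [Subtype.ext hc]
        exact hφ
      rw [if_pos hpos, hε]
    · have hψN : ψ ∈ N := by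
        rw [hN, Finset.mem_filter]
        exact ⟨Finset.mem_univ _, hε⟩
      have hneg : ∏ φ ∈ N, ψ.1 (g φ) < 0 := by
        rw [← Finset.mul_prod_erase N _ hψN]
        refine mul_neg_of_neg_of_pos (hg1 ψ) (Finset.prod_pos ?_)
        intro φ hφ
        refine hg2 φ ψ.1 ψ.2 (fun hc => (Finset.mem_erase.mp hφ).1 (Subtype.ext hc.symm))
      rw [if_neg (not_lt.mpr hneg.le), hε]
  rw [← hker, Subgroup.index_ker, MonoidHom.range_eq_top_of_surjective σ hsurj]
  rw [Nat.card_congr Subgroup.topEquiv.toEquiv, Nat.card_fun]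
  rw [Nat.card_eq_fintype_card, Nat.card_eq_fintype_card, Fintype.card_units_int,
    Fintype.card_coe]

/-- The kernel of `toPrincipalIdeal` is the image of the unit group of `𝓞 K`. -/
lemma ker_toPrincipalIdeal (K : Type*) [Field K] [NumberField K] :
    (toPrincipalIdeal (𝓞 K) K).ker
      = (Units.map (algebraMap (𝓞 K) K).toMonoidHom).range := by
  ext x
  rw [MonoidHom.mem_ker]
  constructor
  · intro hx
    have h1 : FractionalIdeal.spanSingleton (𝓞 K)⁰ (x : K)
        = FractionalIdeal.spanSingleton (𝓞 K)⁰ (1 : K) := by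
      rw [FractionalIdeal.spanSingleton_one]
      rw [← coe_toPrincipalIdeal, hx, Units.val_one]
    obtain ⟨z, hz⟩ := FractionalIdeal.spanSingleton_eq_spanSingleton.mp h1
    have hz' : algebraMap (𝓞 K) K (z : 𝓞 K) * (x : K) = 1 := by
      rwa [Units.smul_def, Algebra.smul_def] at hz
    refine ⟨z⁻¹, Units.ext ?_⟩
    have h2 : algebraMap (𝓞 K) K (z : 𝓞 K) * algebraMap (𝓞 K) K ((z⁻¹ : (𝓞 K)ˣ) : 𝓞 K) = 1 := by
      rw [← map_mul, ← Units.val_mul, mul_inv_cancel, Units.val_one, map_one]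
    have hne : algebraMap (𝓞 K) K (z : 𝓞 K) ≠ 0 := left_ne_zero_of_mul_eq_one hz'
    calc ((Units.map (algebraMap (𝓞 K) K).toMonoidHom) z⁻¹ : K)
        = algebraMap (𝓞 K) K ((z⁻¹ : (𝓞 K)ˣ) : 𝓞 K) := rfl
      _ = (x : K) := mul_left_cancel₀ hne (h2.trans hz'.symm)
  · rintro ⟨u, rfl⟩
    apply Units.ext
    rw [coe_toPrincipalIdeal, Units.val_one]
    have : ((Units.map (algebraMap (𝓞 K) K).toMonoidHom u : Kˣ) : K)
        = algebraMap (𝓞 K) K (u : 𝓞 K) := rfl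
    rw [this, ← FractionalIdeal.spanSingleton_one]
    apply FractionalIdeal.spanSingleton_eq_spanSingleton.mpr
    refine ⟨u⁻¹, ?_⟩
    rw [Units.smul_def, Algebra.smul_def, ← map_mul, ← Units.val_mul, inv_mul_cancel,
      Units.val_one, map_one]

/-- The cardinality of the kernel of the map `G ⧸ N → G ⧸ M` is the relative index. -/
lemma card_ker_quotientMap {G : Type*} [CommGroup G] (N M : Subgroup G)
    (h : N ≤ Subgroup.comap (MonoidHom.id G) M) :
    Nat.card (QuotientGroup.map N M (MonoidHom.id G) h).ker = N.relIndex M := by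
  have hNM : N ≤ M := fun x hx => h hx
  set g : ↥M →* G ⧸ N := (QuotientGroup.mk' N).comp M.subtype with hg
  have hker : (QuotientGroup.map N M (MonoidHom.id G) h).ker = g.range := by
    ext x
    induction x using QuotientGroup.induction_on with
    | H y =>
      rw [MonoidHom.mem_ker, QuotientGroup.map_mk, MonoidHom.id_apply]
      constructor
      · intro hy
        have hyM : y ∈ M := (QuotientGroup.eq_one_iff y).mp hy
        exact ⟨⟨y, hyM⟩, rfl⟩
      · rintro ⟨⟨m, hm⟩, hmy⟩
        have : (QuotientGroup.mk m : G ⧸ N) = QuotientGroup.mk y := hmy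
        have h2 : m⁻¹ * y ∈ N := QuotientGroup.eq.mp this
        have : y ∈ M := by
          have := M.mul_mem hm (hNM h2)
          rwa [mul_inv_cancel_left] at this
        exact (QuotientGroup.eq_one_iff y).mpr this
  have hgker : g.ker = N.subgroupOf M := by
    ext m
    rw [MonoidHom.mem_ker, Subgroup.mem_subgroupOf, hg, MonoidHom.comp_apply,
      QuotientGroup.mk'_apply, QuotientGroup.eq_one_iff]
    rfl
  rw [hker, ← Nat.card_congr (QuotientGroup.quotientKerEquivRange g).toEquiv, hgker]
  rfl

/-- The kernel of the natural surjection from the quotient of fractional ideals by principal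
ideals generated by elements of `K_A` onto the class group `H(K)` has order
`2^{r_A}/[𝓞_Kˣ : n_A(R^*)]`, where `r_A = #Ram_∞(A)` and `n_A(R^*) = 𝓞_Kˣ ∩ K_A`. -/
theorem stmt10 (K : Type*) [Field K] [NumberField K]
    (htr : ∀ v : InfinitePlace K, v.IsReal)
    (S : Finset (K →+* ℝ))
    (h : ((toPrincipalIdeal (𝓞 K) K).comp (positiveAt K S).subtype).range ≤
        Subgroup.comap (MonoidHom.id _) (toPrincipalIdeal (𝓞 K) K).range) :
    Nat.card
      (QuotientGroup.map
        ((toPrincipalIdeal (𝓞 K) K).comp (positiveAt K S).subtype).range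
        (toPrincipalIdeal (𝓞 K) K).range
        (MonoidHom.id _) h).ker
    = 2 ^ S.card / (unitsPositiveAt K S).index := by
  classical
  set f := toPrincipalIdeal (𝓞 K) K with hf
  set T := positiveAt K S with hT
  set j := Units.map (algebraMap (𝓞 K) K).toMonoidHom with hj
  rw [card_ker_quotientMap _ _ h]
  have hN : (f.comp T.subtype).range = Subgroup.map f T := by
    rw [MonoidHom.range_comp, Subgroup.range_subtype]
  have h1 : (Subgroup.map f T).relIndex f.range = (T ⊔ f.ker).index := by
    have h2 := Subgroup.relIndex_comap (H := Subgroup.map f T) f ⊤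
    rw [Subgroup.relIndex_top_right, Subgroup.comap_map_eq, ← MonoidHom.range_eq_map] at h2
    exact h2.symm
  have hkerf : f.ker = j.range := ker_toPrincipalIdeal K
  have hu : unitsPositiveAt K S = T.comap j := by
    ext u
    exact Iff.rfl
  have hui : (unitsPositiveAt K S).index = T.relIndex j.range := by
    rw [hu, Subgroup.index_comap]
  have hsup : T.relIndex (T ⊔ j.range) = T.relIndex j.range :=
    Subgroup.relIndex_sup_left j.range T
  have hmul : T.relIndex (T ⊔ j.range) * (T ⊔ j.range).index = T.index :=
    Subgroup.relIndex_mul_index le_sup_left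
  rw [index_positiveAt K S] at hmul
  have hpos : 0 < T.relIndex (T ⊔ j.range) := by
    rcases Nat.eq_zero_or_pos (T.relIndex (T ⊔ j.range)) with h0 | h0
    · rw [h0, zero_mul] at hmul
      exact absurd hmul.symm (pow_ne_zero _ (by norm_num))
    · exact h0
  rw [hN, h1, hkerf, hui, ← hsup]
  exact (Nat.div_eq_of_eq_mul_left hpos (by rw [← hmul, mul_comm])).symm
end

section
/- If R is an Eichler order in a quaternion algebra A over a number field K, then the group of units of norm in O_K^* equals exactly the elements of O_K^* that are positive at all ramified infinite places: n_A(R^*) = O_K^* ∩ K_A, given that n_A(R) = O_K ∩ K_A. -/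
open NumberField Quaternion

namespace QuaternionAlgebra

private theorem aux_mul_re {K : Type*} [CommRing K] {c₁ c₂ : K} (x y : ℍ[K, c₁, c₂]) :
    ((x * y) * star (x * y)).re = (x * star x).re * (y * star y).re :=
  coe_injective <| by
    conv_lhs => rw [← mul_star_eq_coe, star_mul, mul_assoc, ← mul_assoc y, y.mul_star_eq_coe,
      coe_commutes, ← mul_assoc, x.mul_star_eq_coe, ← coe_mul]

private theorem aux_one_re {K : Type*} [CommRing K] {c₁ c₂ : K} :
    (((1 : ℍ[K, c₁, c₂]) * star 1).re) = 1 := by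
  simp

end QuaternionAlgebra

/-- For an Eichler order `R` in a quaternion algebra `A = ℍ[K,c₁,c₂]` over a number field `K`
(with `R` closed under conjugation), given that the reduced norms of elements of `R` are exactly
`𝓞_K ∩ K_A`, the reduced norms of the units of `R` are exactly `𝓞_Kˣ ∩ K_A`.  Here
`K_A = {x : K | ι_φ(x) > 0 for all φ ∈ Ram_∞(A)}`, `S = Ram_∞(A)`, and the reduced norm is
`n_A(a) = (a * star a).re`. -/
theorem stmt11 (K : Type*) [Field K] [NumberField K] (c₁ c₂ : K)
    (S : Finset (K →+* ℝ))
    (R : Subring ℍ[K, c₁, c₂])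
    (hstar : ∀ a ∈ R, star a ∈ R)
    (hnorm : {x : K | ∃ a ∈ R, (a * star a).re = x}
      = {x : K | (∃ y : 𝓞 K, algebraMap (𝓞 K) K y = x) ∧ ∀ φ ∈ S, 0 < φ x}) :
    {x : K | ∃ a : Rˣ, (((a : R) : ℍ[K, c₁, c₂]) * star ((a : R) : ℍ[K, c₁, c₂])).re = x}
      = {x : K | (∃ u : (𝓞 K)ˣ, algebraMap (𝓞 K) K u = x) ∧ ∀ φ ∈ S, 0 < φ x} := by
  have hnorm' := Set.ext_iff.mp hnorm
  simp only [Set.mem_setOf_eq] at hnorm'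
  ext x
  simp only [Set.mem_setOf_eq]
  constructor
  · rintro ⟨a, rfl⟩
    set α : ℍ[K, c₁, c₂] := ((a : R) : ℍ[K, c₁, c₂]) with hα
    set β : ℍ[K, c₁, c₂] := (((a⁻¹ : Rˣ) : R) : ℍ[K, c₁, c₂]) with hβ
    have hαβ : α * β = 1 := by
      have h : ((a : R) * ((a⁻¹ : Rˣ) : R) : R) = 1 := by exact_mod_cast a.mul_inv
      calc α * β = (((a : R) * ((a⁻¹ : Rˣ) : R) : R) : ℍ[K, c₁, c₂]) := rfl
        _ = ((1 : R) : ℍ[K, c₁, c₂]) := by rw [h]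
        _ = 1 := rfl
    have hmul : (α * star α).re * (β * star β).re = 1 := by
      rw [← QuaternionAlgebra.aux_mul_re, hαβ]
      simp
    obtain ⟨⟨y₁, hy₁⟩, hpos⟩ := (hnorm' (α * star α).re).1 ⟨α, (a : R).2, rfl⟩
    obtain ⟨⟨y₂, hy₂⟩, -⟩ := (hnorm' (β * star β).re).1 ⟨β, ((a⁻¹ : Rˣ) : R).2, rfl⟩
    have hy : y₁ * y₂ = 1 := by
      apply FaithfulSMul.algebraMap_injective (𝓞 K) K
      rw [map_mul, hy₁, hy₂, hmul, map_one]
    refine ⟨⟨⟨y₁, y₂, hy, by rw [mul_comm] at hy; exact hy⟩, hy₁⟩, hpos⟩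
  · rintro ⟨⟨u, hu⟩, hpos⟩
    -- x is a unit of 𝓞 K; its inverse also lies in 𝓞 K ∩ K_A
    set x' : K := algebraMap (𝓞 K) K ((u⁻¹ : (𝓞 K)ˣ) : 𝓞 K) with hx'
    have hxx' : x * x' = 1 := by
      rw [← hu, hx', ← map_mul, ← Units.val_mul, mul_inv_cancel, Units.val_one, map_one]
    have hpos' : ∀ φ ∈ S, 0 < φ x' := by
      intro φ hφ
      have h1 : φ x * φ x' = 1 := by rw [← map_mul, hxx', map_one]
      have := hpos φ hφ
      nlinarith [this, h1]
    obtain ⟨α, hαR, hαn⟩ := (hnorm' x).2 ⟨⟨u, hu⟩, hpos⟩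
    obtain ⟨β, hβR, hβn⟩ := (hnorm' x').2 ⟨⟨((u⁻¹ : (𝓞 K)ˣ) : 𝓞 K), rfl⟩, hpos'⟩
    -- γ = star α * β * star β is a two-sided inverse of α in R
    set γ : ℍ[K, c₁, c₂] := star α * (β * star β) with hγ
    have hγR : γ ∈ R := R.mul_mem (hstar α hαR) (R.mul_mem hβR (hstar β hβR))
    have hαγ : α * γ = 1 := by
      rw [hγ, ← mul_assoc, QuaternionAlgebra.mul_star_eq_coe α,
        QuaternionAlgebra.mul_star_eq_coe β, ← QuaternionAlgebra.coe_mul, hαn, hβn, hxx',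
        QuaternionAlgebra.coe_one]
    have hγα : γ * α = 1 := by
      rw [hγ, QuaternionAlgebra.mul_star_eq_coe β, mul_assoc,
        QuaternionAlgebra.coe_commutes, ← mul_assoc,
        star_comm_self', QuaternionAlgebra.mul_star_eq_coe α,
        ← QuaternionAlgebra.coe_mul, hαn, hβn, hxx',
        QuaternionAlgebra.coe_one]
    refine ⟨⟨⟨α, hαR⟩, ⟨γ, hγR⟩, Subtype.ext hαγ, Subtype.ext hγα⟩, hαn⟩
end
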